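/- For every irreducible fraction p/q with 0 < p/q < 1 and every k ≥ 5, the number of entries equal to k in the reduced degree sequence of G_{p/q} equals the number of entries equal to k+1 in the reduced degree sequence of G_{p/(p+q)}: m(k, p/q) = m(k+1, p/(p+q)). (Note p/(p+q) = F(p/q) with F(x) = x/(1+x), and p/(p+q) is irreducible.) -/
import Mathlib


/-- Symbols for paths in the Farey binary tree. -/
inductive LR
  | L
  | R
deriving DecidableEq

/-- One step in the Farey binary tree: update the current pair of fractions
(represented as pairs (numerator, denominator) of naturals). -/
def fareyStep : ((ℕ × ℕ) × (ℕ × ℕ)) → LR → ((ℕ × ℕ) × (ℕ × ℕ))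
  | ((a, b), (c, d)), LR.L => ((a, b), (a + c, b + d))
  | ((a, b), (c, d)), LR.R => ((a + c, b + d), (c, d))

/-- The final pair of fractions of a word: after reading the first symbol `L`
the current pair is (0/1, 1/1); the remaining symbols update it. -/
def finalPair (w : List LR) : (ℕ × ℕ) × (ℕ × ℕ) :=
  w.tail.foldl fareyStep ((0, 1), (1, 1))

/-- The value ⟨w⟩ of a word: the mediant of its final pair, as (numerator, denominator). -/
def value (w : List LR) : ℕ × ℕ :=
  ((finalPair w).1.1 + (finalPair w).2.1, (finalPair w).1.2 + (finalPair w).2.2)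

/-- A word over {L,R} is a Farey word when its first symbol is `L`. -/
def IsFareyWord (w : List LR) : Prop := w.head? = some LR.L

/-- Concatenation of degree sequences:
[a₁,…,a_s] ⊕ [b₁,…,b_t] = [a₁+1, a₂, …, a_{s−1}, a_s+b₁, b₂, …, b_{t−1}, b_t+1]. -/
def oplus (A B : List ℕ) : List ℕ :=
  (A.dropLast.modifyHead (· + 1)) ++ [A.getLastD 0 + B.headD 0] ++ B.tail.dropLast
    ++ [B.getLastD 0 + 1]

/-- Update of the pair (D(left ancestor), D(right ancestor)) of unreduced degree
sequences along one symbol. -/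
def degStep : (List ℕ × List ℕ) → LR → (List ℕ × List ℕ)
  | (A, B), LR.L => (A, oplus A B)
  | (A, B), LR.R => (oplus A B, B)

/-- The pair (D(a/b), D(c/d)) of unreduced degree sequences of the final pair of a word;
0/1 and 1/1 are both assigned the list [1,1]. -/
def degPair (w : List LR) : List ℕ × List ℕ :=
  w.tail.foldl degStep ([1, 1], [1, 1])

/-- The unreduced degree sequence D(⟨w⟩) = D(a/b) ⊕ D(c/d) of the value of a word. -/
def Dseq (w : List LR) : List ℕ :=
  oplus (degPair w).1 (degPair w).2

/-- Reduction: [k₁,…,k_{q+1}] becomes [k₂,…,k_q, k₁+k_{q+1}]; the last entry is the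
boundary degree and the remaining ones are the inner degrees. -/
def reduce (D : List ℕ) : List ℕ :=
  D.tail.dropLast ++ [D.headD 0 + D.getLastD 0]

/-- The reduced degree sequence of the Haros graph G_{⟨w⟩}. -/
def degSeq (w : List LR) : List ℕ := reduce (Dseq w)

/-- Degree-distribution entropy S of the Haros graph G_{⟨w⟩}:
S = −Σ_k P(k)·ln P(k), summed over the degree values occurring in the reduced
degree sequence, where P(k) = m(k)/q. -/
noncomputable def Sent (w : List LR) : ℝ :=
  -∑ k ∈ (degSeq w).toFinset,
    (((degSeq w).count k : ℝ) / ((value w).2 : ℝ)) *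
      Real.log (((degSeq w).count k : ℝ) / ((value w).2 : ℝ))

/-- Reduced entropy H of the Haros graph G_{⟨w⟩} (with the convention 0·ln 0 = 0,
automatic since Real.log 0 = 0). -/
noncomputable def Hent (w : List LR) : ℝ :=
  let x : ℝ := ((value w).1 : ℝ) / ((value w).2 : ℝ)
  if x ≤ 1 / 2 then
    Sent w + 2 * x * Real.log x + (1 - 2 * x) * Real.log (1 - 2 * x)
  else
    Sent w + 2 * (1 - x) * Real.log (1 - x) + (2 * x - 1) * Real.log (2 * x - 1)

namespace S10aux

@[simp] lemma fareyStep_L (a b c d : ℕ) :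
    fareyStep ((a,b),(c,d)) LR.L = ((a,b),(a+c,b+d)) := rfl
@[simp] lemma fareyStep_R (a b c d : ℕ) :
    fareyStep ((a,b),(c,d)) LR.R = ((a+c,b+d),(c,d)) := rfl

/-- The value of continuing from an arbitrary pair. -/
def valFrom (t : List LR) (P : (ℕ × ℕ) × (ℕ × ℕ)) : ℕ × ℕ :=
  ((t.foldl fareyStep P).1.1 + (t.foldl fareyStep P).2.1,
   (t.foldl fareyStep P).1.2 + (t.foldl fareyStep P).2.2)

lemma valFrom_cons (s : List LR) (P) (a : LR) :
    valFrom (a :: s) P = valFrom s (fareyStep P a) := rfl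

@[simp] lemma valFrom_nil (P : (ℕ × ℕ) × (ℕ × ℕ)) :
    valFrom [] P = (P.1.1 + P.2.1, P.1.2 + P.2.2) := rfl

lemma between : ∀ (t : List LR) (a b c d : ℕ), a * d < c * b →
    a * (valFrom t ((a,b),(c,d))).2 < (valFrom t ((a,b),(c,d))).1 * b ∧
    (valFrom t ((a,b),(c,d))).1 * d < c * (valFrom t ((a,b),(c,d))).2 := by
  intro t
  induction t with
  | nil =>
    intro a b c d h
    simp only [valFrom, List.foldl_nil]
    constructor <;> nlinarith
  | cons s t ih =>
    intro a b c d h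
    cases s with
    | L =>
      have h' : a * (b+d) < (a+c) * b := by nlinarith
      obtain ⟨h1, h2⟩ := ih a b (a+c) (b+d) h'
      rw [valFrom_cons, fareyStep_L]
      set v := valFrom t ((a,b),(a+c,b+d)) with hv
      refine ⟨h1, ?_⟩
      nlinarith
    | R =>
      have h' : (a+c) * d < c * (b+d) := by nlinarith
      obtain ⟨h1, h2⟩ := ih (a+c) (b+d) c d h'
      rw [valFrom_cons, fareyStep_R]
      set v := valFrom t ((a+c,b+d),(c,d)) with hv
      refine ⟨?_, h2⟩
      nlinarith


lemma valInj : ∀ (t1 t2 : List LR) (a b c d : ℕ), a * d < c * b →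
    valFrom t1 ((a,b),(c,d)) = valFrom t2 ((a,b),(c,d)) → t1 = t2 := by
  intro t1
  induction t1 with
  | nil =>
    intro t2 a b c d h heq
    cases t2 with
    | nil => rfl
    | cons s t =>
      exfalso
      cases s with
      | L =>
        have h' : a * (b+d) < (a+c) * b := by nlinarith
        have h2 := (between t a b (a+c) (b+d) h').2
        rw [valFrom_cons, fareyStep_L] at heq
        rw [← heq] at h2
        simp only [valFrom_nil] at h2
        nlinarith
      | R =>
        have h' : (a+c) * d < c * (b+d) := by nlinarith
        have h2 := (between t (a+c) (b+d) c d h').1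
        rw [valFrom_cons, fareyStep_R] at heq
        rw [← heq] at h2
        simp only [valFrom_nil] at h2
        nlinarith
  | cons s1 t1 ih =>
    intro t2 a b c d h heq
    cases t2 with
    | nil =>
      exfalso
      cases s1 with
      | L =>
        have h' : a * (b+d) < (a+c) * b := by nlinarith
        have h2 := (between t1 a b (a+c) (b+d) h').2
        rw [valFrom_cons, fareyStep_L] at heq
        rw [heq] at h2
        simp only [valFrom_nil] at h2
        nlinarith
      | R =>
        have h' : (a+c) * d < c * (b+d) := by nlinarith
        have h2 := (between t1 (a+c) (b+d) c d h').1
        rw [valFrom_cons, fareyStep_R] at heq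
        rw [heq] at h2
        simp only [valFrom_nil] at h2
        nlinarith
    | cons s2 t2 =>
      cases s1 with
      | L =>
        cases s2 with
        | L =>
          have h' : a * (b+d) < (a+c) * b := by nlinarith
          rw [valFrom_cons, fareyStep_L, valFrom_cons, fareyStep_L] at heq
          rw [ih t2 a b (a+c) (b+d) h' heq]
        | R =>
          exfalso
          have h1' : a * (b+d) < (a+c) * b := by nlinarith
          have h2' : (a+c) * d < c * (b+d) := by nlinarith
          have hL := (between t1 a b (a+c) (b+d) h1').2
          have hR := (between t2 (a+c) (b+d) c d h2').1
          rw [valFrom_cons, fareyStep_L, valFrom_cons, fareyStep_R] at heq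
          rw [heq] at hL
          nlinarith
      | R =>
        cases s2 with
        | L =>
          exfalso
          have h1' : a * (b+d) < (a+c) * b := by nlinarith
          have h2' : (a+c) * d < c * (b+d) := by nlinarith
          have hL := (between t2 a b (a+c) (b+d) h1').2
          have hR := (between t1 (a+c) (b+d) c d h2').1
          rw [valFrom_cons, fareyStep_R, valFrom_cons, fareyStep_L] at heq
          rw [heq] at hR
          nlinarith
        | R =>
          have h' : (a+c) * d < c * (b+d) := by nlinarith
          rw [valFrom_cons, fareyStep_R, valFrom_cons, fareyStep_R] at heq
          rw [ih t2 (a+c) (b+d) c d h' heq]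

lemma isFarey_cons {w : List LR} (hw : IsFareyWord w) : ∃ t, w = LR.L :: t := by
  cases w with
  | nil => simp [IsFareyWord] at hw
  | cons a t =>
    simp only [IsFareyWord, List.head?_cons, Option.some.injEq] at hw
    exact ⟨t, by rw [hw]⟩

lemma value_eq_valFrom (t : List LR) : value (LR.L :: t) = valFrom t ((0,1),(1,1)) := rfl

lemma farey_value_inj {w w' : List LR} (hw : IsFareyWord w) (hw' : IsFareyWord w')
    (h : value w = value w') : w = w' := by
  obtain ⟨t, rfl⟩ := isFarey_cons hw
  obtain ⟨t', rfl⟩ := isFarey_cons hw'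
  rw [value_eq_valFrom, value_eq_valFrom] at h
  rw [valInj t t' 0 1 1 1 (by norm_num) h]


def Mmap (P : (ℕ × ℕ) × (ℕ × ℕ)) : (ℕ × ℕ) × (ℕ × ℕ) :=
  ((P.1.1, P.1.1 + P.1.2), (P.2.1, P.2.1 + P.2.2))

lemma foldM : ∀ (t : List LR) (P : (ℕ × ℕ) × (ℕ × ℕ)),
    t.foldl fareyStep (Mmap P) = Mmap (t.foldl fareyStep P) := by
  intro t
  induction t with
  | nil => intro P; rfl
  | cons s t ih =>
    intro P
    rw [List.foldl_cons, List.foldl_cons]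
    have hstep : fareyStep (Mmap P) s = Mmap (fareyStep P s) := by
      obtain ⟨⟨a, b⟩, ⟨c, d⟩⟩ := P
      cases s <;> simp [Mmap, Prod.ext_iff] <;> omega
    rw [hstep, ih]

lemma value_Lcons {w : List LR} (hw : IsFareyWord w) :
    value (LR.L :: w) = ((value w).1, (value w).1 + (value w).2) := by
  obtain ⟨t, rfl⟩ := isFarey_cons hw
  have hfp : finalPair (LR.L :: LR.L :: t) = Mmap (finalPair (LR.L :: t)) := by
    show (LR.L :: t).foldl fareyStep ((0,1),(1,1)) = Mmap (t.foldl fareyStep ((0,1),(1,1)))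
    rw [List.foldl_cons, fareyStep_L]
    have h0 : ((0,1),(0+1,1+1)) = Mmap ((0,1),(1,1)) := rfl
    rw [h0, foldM]
  simp only [value, hfp]
  generalize finalPair (LR.L :: t) = P
  obtain ⟨⟨a, b⟩, ⟨c, d⟩⟩ := P
  simp [Mmap, Prod.ext_iff]
  omega


lemma getLastD_concat' (l : List ℕ) (a d : ℕ) : (l ++ [a]).getLastD d = a := by
  rw [List.getLastD_eq_getLast?, List.getLast?_concat]; rfl

lemma oplus_concat (x u y v : ℕ) (m n : List ℕ) :
    oplus ((x :: m) ++ [u]) ((y :: n) ++ [v]) = ((x+1) :: (m ++ (u + y) :: n)) ++ [v+1] := by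
  unfold oplus
  rw [List.dropLast_concat, getLastD_concat', getLastD_concat']
  rw [show (y :: n) ++ [v] = y :: (n ++ [v]) from rfl]
  rw [List.tail_cons, List.dropLast_concat, List.headD_cons, List.modifyHead]
  simp

/-- Main relation: same head, last entry +1, interior entries ≥ 5 shifted by +1. -/
def Gd (X X' : List ℕ) : Prop :=
  ∃ x u : ℕ, ∃ m m' : List ℕ, X = (x :: m) ++ [u] ∧ X' = (x :: m') ++ [u+1] ∧
    ∀ j, 6 ≤ j → m'.count j = m.count (j-1)

def G1 (X X' : List ℕ) : Prop :=
  ∃ u : ℕ, ∃ m m' : List ℕ, X = (2 :: m) ++ [u] ∧ X' = (2 :: m') ++ [u+1] ∧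
    ∀ j, 6 ≤ j → m'.count j = m.count (j-1)

def G2 (X X' : List ℕ) : Prop :=
  ∃ x : ℕ, ∃ m m' : List ℕ, X = (x :: m) ++ [2] ∧ X' = (x :: m') ++ [3] ∧
    ∀ j, 6 ≤ j → m'.count j = m.count (j-1)

lemma G1.gd {X X'} (h : G1 X X') : Gd X X' := by
  obtain ⟨u, m, m', h1, h2, hm⟩ := h; exact ⟨2, u, m, m', h1, h2, hm⟩

lemma G2.gd {X X'} (h : G2 X X') : Gd X X' := by
  obtain ⟨x, m, m', h1, h2, hm⟩ := h; exact ⟨x, 2, m, m', h1, h2, hm⟩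

lemma gd_oplus {A A' B B'} (hA : Gd A A') (hB : Gd B B') :
    Gd (oplus A B) (oplus A' B') := by
  obtain ⟨x, u, m, m', rfl, rfl, hm⟩ := hA
  obtain ⟨y, v, n, n', rfl, rfl, hn⟩ := hB
  rw [oplus_concat, oplus_concat]
  refine ⟨x+1, v+1, m ++ (u + y) :: n, m' ++ (u + 1 + y) :: n', rfl, rfl, ?_⟩
  intro j hj
  simp only [List.count_append, List.count_cons, beq_iff_eq, hm j hj, hn j hj]
  split_ifs <;> omega

lemma g1_step {B B'} (h : G1 B B') : G1 (oplus [1,1] B) (oplus [1,1] B') := by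
  obtain ⟨u, m, m', rfl, rfl, hm⟩ := h
  have e1 : ([1,1] : List ℕ) = (1 :: []) ++ [1] := rfl
  rw [e1, oplus_concat, oplus_concat]
  refine ⟨u+1, (1+2) :: m, (1+2) :: m', rfl, rfl, ?_⟩
  intro j hj
  simp only [List.count_cons, beq_iff_eq, hm j hj]
  split_ifs <;> omega

lemma g2_step {A A'} (h : G2 A A') : G2 (oplus A [1,1]) (oplus A' [2,2,2]) := by
  obtain ⟨x, m, m', rfl, rfl, hm⟩ := h
  have e1 : ([1,1] : List ℕ) = (1 :: []) ++ [1] := rfl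
  have e2 : ([2,2,2] : List ℕ) = (2 :: [2]) ++ [2] := rfl
  rw [e1, e2, oplus_concat, oplus_concat]
  refine ⟨x+1, m ++ [2+1], m' ++ [3+2, 2], by simp, by simp, ?_⟩
  intro j hj
  simp only [List.count_append, List.count_cons, List.count_nil, beq_iff_eq, hm j hj]
  split_ifs <;> omega

lemma gd_base : Gd [2,2,2] [2,3,2,3] := by
  refine ⟨2, 2, [2], [3,2], rfl, rfl, ?_⟩
  intro j hj
  simp only [List.count_cons, List.count_nil, beq_iff_eq]
  split_ifs <;> omega


/-- Full invariant for the pair of degree-pair machines. -/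
def Inv (A B A' B' : List ℕ) : Prop :=
  (A = [1,1] ∧ A' = [1,1] ∧ B = [1,1] ∧ B' = [2,2,2])
  ∨ (A = [1,1] ∧ A' = [1,1] ∧ G1 B B')
  ∨ (G2 A A' ∧ B = [1,1] ∧ B' = [2,2,2])
  ∨ (Gd A A' ∧ Gd B B')

lemma oplus_11_11 : oplus [1,1] [1,1] = [2,2,2] := by decide
lemma oplus_11_222 : oplus [1,1] [2,2,2] = [2,3,2,3] := by decide

lemma g1_base : G1 [2,2,2] [2,3,2,3] := by
  refine ⟨2, [2], [3,2], rfl, rfl, ?_⟩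
  intro j hj
  simp only [List.count_cons, List.count_nil, beq_iff_eq]
  split_ifs <;> omega

lemma g2_base : G2 [2,2,2] [2,3,2,3] := by
  refine ⟨2, [2], [3,2], rfl, by norm_num, ?_⟩
  intro j hj
  simp only [List.count_cons, List.count_nil, beq_iff_eq]
  split_ifs <;> omega

lemma inv_step {A B A' B'} (h : Inv A B A' B') (s : LR) :
    Inv (degStep (A, B) s).1 (degStep (A, B) s).2
        (degStep (A', B') s).1 (degStep (A', B') s).2 := by
  cases s with
  | L =>
    simp only [degStep]
    rcases h with ⟨hA, hA', hB, hB'⟩ | ⟨hA, hA', hB⟩ | ⟨hA, hB, hB'⟩ | ⟨hA, hB⟩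
    · subst hA; subst hA'; subst hB; subst hB'
      exact Or.inr (Or.inl ⟨rfl, rfl, by rw [oplus_11_11, oplus_11_222]; exact g1_base⟩)
    · subst hA; subst hA'
      exact Or.inr (Or.inl ⟨rfl, rfl, g1_step hB⟩)
    · subst hB; subst hB'
      exact Or.inr (Or.inr (Or.inr ⟨hA.gd, (g2_step hA).gd⟩))
    · exact Or.inr (Or.inr (Or.inr ⟨hA, gd_oplus hA hB⟩))
  | R =>
    simp only [degStep]
    rcases h with ⟨hA, hA', hB, hB'⟩ | ⟨hA, hA', hB⟩ | ⟨hA, hB, hB'⟩ | ⟨hA, hB⟩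
    · subst hA; subst hA'; subst hB; subst hB'
      exact Or.inr (Or.inr (Or.inl ⟨by rw [oplus_11_11, oplus_11_222]; exact g2_base, rfl, rfl⟩))
    · subst hA; subst hA'
      exact Or.inr (Or.inr (Or.inr ⟨(g1_step hB).gd, hB.gd⟩))
    · subst hB; subst hB'
      exact Or.inr (Or.inr (Or.inl ⟨g2_step hA, rfl, rfl⟩))
    · exact Or.inr (Or.inr (Or.inr ⟨gd_oplus hA hB, hB⟩))

lemma inv_fold (t : List LR) :
    Inv (t.foldl degStep ([1,1],[1,1])).1 (t.foldl degStep ([1,1],[1,1])).2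
        (t.foldl degStep ([1,1],[2,2,2])).1 (t.foldl degStep ([1,1],[2,2,2])).2 := by
  induction t using List.reverseRecOn with
  | nil => exact Or.inl ⟨rfl, rfl, rfl, rfl⟩
  | append_singleton t s ih =>
    rw [List.foldl_append, List.foldl_append, List.foldl_cons, List.foldl_nil,
      List.foldl_cons, List.foldl_nil]
    generalize hP : t.foldl degStep ([1,1],[1,1]) = P at ih
    generalize hQ : t.foldl degStep ([1,1],[2,2,2]) = Q at ih
    obtain ⟨A, B⟩ := P
    obtain ⟨A', B'⟩ := Q
    exact inv_step ih s

lemma inv_final {A B A' B'} (h : Inv A B A' B') : Gd (oplus A B) (oplus A' B') := by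
  rcases h with ⟨hA, hA', hB, hB'⟩ | ⟨hA, hA', hB⟩ | ⟨hA, hB, hB'⟩ | ⟨hA, hB⟩
  · subst hA; subst hA'; subst hB; subst hB'
    rw [oplus_11_11, oplus_11_222]; exact gd_base
  · subst hA; subst hA'; exact (g1_step hB).gd
  · subst hB; subst hB'; exact (g2_step hA).gd
  · exact gd_oplus hA hB

lemma gd_Dseq {w : List LR} (hw : IsFareyWord w) : Gd (Dseq w) (Dseq (LR.L :: w)) := by
  obtain ⟨t, rfl⟩ := isFarey_cons hw
  have h1 : degPair (LR.L :: t) = t.foldl degStep ([1,1],[1,1]) := rfl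
  have h2 : degPair (LR.L :: LR.L :: t) = t.foldl degStep ([1,1],[2,2,2]) := by
    show (LR.L :: t).foldl degStep ([1,1],[1,1]) = _
    rw [List.foldl_cons]
    have : degStep ([1,1],[1,1]) LR.L = ([1,1],[2,2,2]) := by
      simp only [degStep, oplus_11_11]
    rw [this]
  unfold Dseq
  rw [h1, h2]
  exact inv_final (inv_fold t)


lemma reduce_concat (x u : ℕ) (m : List ℕ) :
    reduce ((x :: m) ++ [u]) = m ++ [x + u] := by
  unfold reduce
  rw [show (x :: m) ++ [u] = x :: (m ++ [u]) from rfl]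
  rw [List.tail_cons, List.dropLast_concat, List.headD_cons]
  rw [show (x :: (m ++ [u])) = (x :: m) ++ [u] from rfl, getLastD_concat']

lemma count_step {w : List LR} (hw : IsFareyWord w) {k : ℕ} (hk : 5 ≤ k) :
    (degSeq w).count k = (degSeq (LR.L :: w)).count (k + 1) := by
  obtain ⟨x, u, m, m', h1, h2, hm⟩ := gd_Dseq hw
  unfold degSeq
  rw [h1, h2, reduce_concat, reduce_concat]
  have hcount := hm (k+1) (by omega)
  simp only [List.count_append, List.count_cons, List.count_nil, beq_iff_eq,
    Nat.add_sub_cancel] at hcount ⊢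
  rw [hcount]
  split_ifs <;> omega

end S10aux

/-- for every irreducible fraction p/q ∈ (0,1) and every k ≥ 5,
m(k, p/q) = m(k+1, p/(p+q)), where p/(p+q) = F(p/q) with F(x) = x/(1+x). -/
theorem statement10 (p q : ℕ) (hcop : Nat.Coprime p q) (hp : 0 < p) (hpq : p < q)
    (k : ℕ) (hk : 5 ≤ k) (w w' : List LR) (hw : IsFareyWord w) (hw' : IsFareyWord w')
    (hval : value w = (p, q)) (hval' : value w' = (p, p + q)) :
    (degSeq w).count k = (degSeq w').count (k + 1) := by
  have hLw : value (LR.L :: w) = (p, p + q) := by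
    rw [S10aux.value_Lcons hw, hval]
  have hwL : IsFareyWord (LR.L :: w) := rfl
  have hww : w' = LR.L :: w :=
    S10aux.farey_value_inj hw' hwL (hval'.trans hLw.symm)
  rw [hww]
  exact S10aux.count_step hw hk
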